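/- For every irrational γ > 0, υ(γ⁻¹) = inf{c > 0 : m(⌈mγ⌉ - mγ) < c for infinitely many m ∈ ℕ}, where υ is the one-sided approximation constant υ(β) = inf{c > 0 : 0 < β - p/q < c/q² for infinitely many (p,q) ∈ ℤ × ℕ}. -/

import Mathlib

noncomputable def upsilon (γ : ℝ) : ℝ :=
  sInf {c : ℝ | 0 < c ∧
    {pq : ℤ × ℕ | 0 < pq.2 ∧ 0 < γ - (pq.1 : ℝ) / (pq.2 : ℝ) ∧
      γ - (pq.1 : ℝ) / (pq.2 : ℝ) < c / (pq.2 : ℝ) ^ 2}.Infinite}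

private lemma ceil_gt_aux (γ : ℝ) (hγ : Irrational γ) (m : ℕ) (hm : 0 < m) :
    (m : ℝ) * γ < (⌈(m : ℝ) * γ⌉ : ℝ) := by
  refine lt_of_le_of_ne (Int.le_ceil _) fun h => ?_
  exact (hγ.natCast_mul hm.ne') ⟨(⌈(m : ℝ) * γ⌉ : ℚ), by push_cast; exact h.symm⟩

/-- direction: if the `m` set is infinite for `c`, the pair set is infinite for `c + ε`. -/
private lemma lemB (γ : ℝ) (hγ : Irrational γ) (hpos : 0 < γ) (c ε : ℝ) (hc : 0 < c)
    (hε : 0 < ε)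
    (h : {m : ℕ | 0 < m ∧ (m : ℝ) * ((⌈(m : ℝ) * γ⌉ : ℝ) - (m : ℝ) * γ) < c}.Infinite) :
    {pq : ℤ × ℕ | 0 < pq.2 ∧ 0 < γ⁻¹ - (pq.1 : ℝ) / (pq.2 : ℝ) ∧
      γ⁻¹ - (pq.1 : ℝ) / (pq.2 : ℝ) < (c + ε) / (pq.2 : ℝ) ^ 2}.Infinite := by
  have hεγ : 0 < ε * γ := mul_pos hε hpos
  obtain ⟨N, hN⟩ := exists_nat_gt (c / Real.sqrt (ε * γ))
  have hsq : 0 < Real.sqrt (ε * γ) := Real.sqrt_pos.mpr hεγ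
  have h2 := (h.diff (Set.finite_lt_nat N))
  refine Set.Infinite.mono ?_
    (h2.image (f := fun m : ℕ => ((m : ℤ), (⌈(m : ℝ) * γ⌉).toNat)) ?_)
  · rintro pq ⟨m, ⟨⟨hm, hlt⟩, hmN⟩, rfl⟩
    simp only [Set.mem_setOf_eq, Int.cast_natCast]
    have hmN' : N ≤ m := not_lt.mp hmN
    have hmpos : (0 : ℝ) < m := by exact_mod_cast hm
    have hmγ : 0 < (m : ℝ) * γ := mul_pos hmpos hpos
    have hqpos : 0 < ⌈(m : ℝ) * γ⌉ := Int.ceil_pos.mpr hmγ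
    have hQcast : ((⌈(m : ℝ) * γ⌉.toNat : ℕ) : ℝ) = (⌈(m : ℝ) * γ⌉ : ℝ) := by
      rw [← Int.cast_natCast, Int.toNat_of_nonneg hqpos.le]
    set Q : ℝ := ((⌈(m : ℝ) * γ⌉.toNat : ℕ) : ℝ) with hQ
    have hQgt : (m : ℝ) * γ < Q := by rw [hQcast]; exact ceil_gt_aux γ hγ m hm
    have hQpos : 0 < Q := lt_trans hmγ hQgt
    set θ : ℝ := Q - (m : ℝ) * γ with hθ
    have hθpos : 0 < θ := sub_pos.mpr hQgt
    have hmθ : (m : ℝ) * θ < c := by rw [hθ, hQcast]; exact hlt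
    have hθsmall : θ < Real.sqrt (ε * γ) := by
      have h1 : c / Real.sqrt (ε * γ) < (m : ℝ) := lt_of_lt_of_le hN (by exact_mod_cast hmN')
      have h2 : c < (m : ℝ) * Real.sqrt (ε * γ) := by
        rw [div_lt_iff₀ hsq] at h1; linarith
      nlinarith
    have hθsq : θ ^ 2 < ε * γ := by
      have := Real.sq_sqrt hεγ.le
      nlinarith
    refine ⟨by simpa using hqpos, ?_, ?_⟩
    · have key : γ⁻¹ - (m : ℝ) / Q = θ / (Q * γ) := by
        rw [hθ]; field_simp
      rw [key]
      positivity
    · have key : γ⁻¹ - (m : ℝ) / Q = θ / (Q * γ) := by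
        rw [hθ]; field_simp
      rw [key]
      rw [div_lt_div_iff₀ (mul_pos hQpos hpos) (pow_pos hQpos 2)]
      have hQeq : Q = (m : ℝ) * γ + θ := by rw [hθ]; ring
      have h1 : θ * Q < (c + ε) * γ := by nlinarith
      nlinarith
  · intro a _ b _ hab
    simpa using congrArg Prod.fst hab

/-- key pointwise fact for the other direction -/
private lemma keyfact (γ : ℝ) (hγ : Irrational γ) (hpos : 0 < γ) (c : ℝ) (hc : 0 < c)
    (p : ℤ) (q : ℕ) (hq : 0 < q)
    (h1 : 0 < γ⁻¹ - (p : ℝ) / (q : ℝ))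
    (h2 : γ⁻¹ - (p : ℝ) / (q : ℝ) < c / (q : ℝ) ^ 2)
    (hqbig : max (c * γ) 2 < (q : ℝ)) :
    0 < p ∧ ⌈(p : ℝ) * γ⌉ = (q : ℤ) ∧ (p : ℝ) * ((q : ℝ) - (p : ℝ) * γ) < c := by
  have hq0 : (0 : ℝ) < q := by exact_mod_cast hq
  have key : γ⁻¹ - (p : ℝ) / (q : ℝ) = ((q : ℝ) - (p : ℝ) * γ) / ((q : ℝ) * γ) := by
    field_simp
  rw [key] at h1 h2
  set θ : ℝ := (q : ℝ) - (p : ℝ) * γ with hθdef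
  have hθpos : 0 < θ := by
    rcases div_pos_iff.mp h1 with ⟨h, _⟩ | ⟨_, h⟩
    · exact h
    · nlinarith [mul_pos hq0 hpos]
  rw [div_lt_div_iff₀ (mul_pos hq0 hpos) (pow_pos hq0 2)] at h2
  have hcγ : c * γ < (q : ℝ) := lt_of_le_of_lt (le_max_left _ _) hqbig
  have hq2 : (2 : ℝ) < (q : ℝ) := lt_of_le_of_lt (le_max_right _ _) hqbig
  have hqq : (q : ℝ) * θ < c * γ := by nlinarith
  have hθlt1 : θ < 1 := by nlinarith
  have hppos : (0 : ℝ) < (p : ℝ) := by nlinarith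
  have hpz : 0 < p := by exact_mod_cast hppos
  have hceil : ⌈(p : ℝ) * γ⌉ = (q : ℤ) := by
    rw [Int.ceil_eq_iff]
    constructor
    · push_cast; linarith
    · push_cast; linarith
  refine ⟨hpz, hceil, ?_⟩
  nlinarith [mul_lt_mul_of_pos_right (show (p : ℝ) * γ < (q : ℝ) by linarith) hθpos]

/-- direction: pair set infinite for c implies m set infinite for c -/
private lemma lemA (γ : ℝ) (hγ : Irrational γ) (hpos : 0 < γ) (c : ℝ) (hc : 0 < c)
    (h : {pq : ℤ × ℕ | 0 < pq.2 ∧ 0 < γ⁻¹ - (pq.1 : ℝ) / (pq.2 : ℝ) ∧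
      γ⁻¹ - (pq.1 : ℝ) / (pq.2 : ℝ) < c / (pq.2 : ℝ) ^ 2}.Infinite) :
    {m : ℕ | 0 < m ∧ (m : ℝ) * ((⌈(m : ℝ) * γ⌉ : ℝ) - (m : ℝ) * γ) < c}.Infinite := by
  set B : Set (ℤ × ℕ) := {pq : ℤ × ℕ | 0 < pq.2 ∧ 0 < γ⁻¹ - (pq.1 : ℝ) / (pq.2 : ℝ) ∧
      γ⁻¹ - (pq.1 : ℝ) / (pq.2 : ℝ) < c / (pq.2 : ℝ) ^ 2} with hB
  obtain ⟨n, hn⟩ := exists_nat_ge (max (c * γ) 2)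
  -- the part with small denominator is finite
  have hfin : (B ∩ {pq : ℤ × ℕ | pq.2 ≤ n}).Finite := by
    set M : ℤ := ⌈c + (n : ℝ) * γ⁻¹⌉ with hM
    have hMreal : c + (n : ℝ) * γ⁻¹ ≤ (M : ℝ) := Int.le_ceil _
    refine Set.Finite.subset ((Set.finite_Icc (-M) M).prod (Set.finite_Icc 0 n)) ?_
    rintro ⟨p, q⟩ ⟨⟨hq, h1, h2⟩, hqn⟩
    have hq0 : (0 : ℝ) < q := by exact_mod_cast hq
    have hq1 : (1 : ℝ) ≤ q := by exact_mod_cast hq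
    have hqn' : (q : ℝ) ≤ n := by exact_mod_cast hqn
    have hinv : (0 : ℝ) ≤ γ⁻¹ := (inv_pos.mpr hpos).le
    have hup : (p : ℝ) < γ⁻¹ * q := by
      rw [sub_pos, div_lt_iff₀ hq0] at h1; exact h1
    have hdown : γ⁻¹ * q - (p : ℝ) < c := by
      have := mul_lt_mul_of_pos_right h2 hq0
      have e1 : (γ⁻¹ - (p : ℝ) / q) * q = γ⁻¹ * q - p := by field_simp
      have e2 : c / (q : ℝ) ^ 2 * q = c / q := by field_simp
      rw [e1, e2] at this
      have : c / (q : ℝ) ≤ c := div_le_self hc.le hq1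
      linarith [mul_lt_mul_of_pos_right h2 hq0, e1, e2]
    constructor
    · simp only [Set.mem_Icc]
      constructor
      · have : -(M : ℝ) ≤ (p : ℝ) := by
          nlinarith [mul_nonneg hinv hq0.le]
        exact_mod_cast this
      · have : (p : ℝ) ≤ (M : ℝ) := by
          nlinarith [mul_nonneg hinv (sub_nonneg.mpr hqn')]
        exact_mod_cast this
    · exact Set.mem_Icc.mpr ⟨Nat.zero_le _, hqn⟩
  have hT : (B \ (B ∩ {pq : ℤ × ℕ | pq.2 ≤ n})).Infinite := h.diff hfin
  have hbig : ∀ pq ∈ B \ (B ∩ {pq : ℤ × ℕ | pq.2 ≤ n}),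
      pq ∈ B ∧ max (c * γ) 2 < (pq.2 : ℝ) := by
    rintro ⟨p, q⟩ ⟨hmem, hnot⟩
    refine ⟨hmem, ?_⟩
    have : ¬ q ≤ n := fun hle => hnot ⟨hmem, hle⟩
    have : n < q := not_le.mp this
    calc max (c * γ) 2 ≤ (n : ℝ) := hn
      _ < (q : ℝ) := by exact_mod_cast this
  refine Set.Infinite.mono ?_ (hT.image (f := fun pq : ℤ × ℕ => pq.1.toNat) ?_)
  · rintro m ⟨⟨p, q⟩, hpq, rfl⟩
    obtain ⟨⟨hq, h1, h2⟩, hqbig⟩ := hbig _ hpq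
    obtain ⟨hppos, hceil, hval⟩ := keyfact γ hγ hpos c hc p q hq h1 h2 hqbig
    have hcast : ((p.toNat : ℕ) : ℝ) = (p : ℝ) := by
      rw [← Int.cast_natCast, Int.toNat_of_nonneg hppos.le]
    have hmpos : 0 < p.toNat := by omega
    simp only [Set.mem_setOf_eq]
    refine ⟨hmpos, ?_⟩
    rw [hcast, hceil]
    push_cast
    exact hval
  · rintro ⟨p, q⟩ hpq ⟨p', q'⟩ hpq' hfst
    obtain ⟨⟨hq, h1, h2⟩, hqbig⟩ := hbig _ hpq
    obtain ⟨⟨hq', h1', h2'⟩, hqbig'⟩ := hbig _ hpq'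
    obtain ⟨hppos, hceil, -⟩ := keyfact γ hγ hpos c hc p q hq h1 h2 hqbig
    obtain ⟨hppos', hceil', -⟩ := keyfact γ hγ hpos c hc p' q' hq' h1' h2' hqbig'
    simp only at hfst
    have hpp : p = p' := by omega
    have hqq : (q : ℤ) = (q' : ℤ) := by rw [← hceil, ← hceil', hpp]
    exact Prod.ext hpp (by exact_mod_cast hqq)

theorem stmt_7 (γ : ℝ) (hγ : Irrational γ) (hpos : 0 < γ) :
    upsilon γ⁻¹ = sInf {c : ℝ | 0 < c ∧
      {m : ℕ | 0 < m ∧ (m : ℝ) * ((⌈(m : ℝ) * γ⌉ : ℝ) - (m : ℝ) * γ) < c}.Infinite} := by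
  rw [upsilon]
  set SU : Set ℝ := {c : ℝ | 0 < c ∧
    {pq : ℤ × ℕ | 0 < pq.2 ∧ 0 < γ⁻¹ - (pq.1 : ℝ) / (pq.2 : ℝ) ∧
      γ⁻¹ - (pq.1 : ℝ) / (pq.2 : ℝ) < c / (pq.2 : ℝ) ^ 2}.Infinite} with hSU
  set SR : Set ℝ := {c : ℝ | 0 < c ∧
      {m : ℕ | 0 < m ∧ (m : ℝ) * ((⌈(m : ℝ) * γ⌉ : ℝ) - (m : ℝ) * γ) < c}.Infinite} with hSR
  have hsub : SU ⊆ SR := fun c hc => ⟨hc.1, lemA γ hγ hpos c hc.1 hc.2⟩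
  have hstep : ∀ c ∈ SR, ∀ ε > (0:ℝ), c + ε ∈ SU := fun c hc ε hε =>
    ⟨by linarith [hc.1], lemB γ hγ hpos c ε hc.1 hε hc.2⟩
  have hbddSR : BddBelow SR := ⟨0, fun x hx => hx.1.le⟩
  have hbddSU : BddBelow SU := ⟨0, fun x hx => hx.1.le⟩
  rcases Set.eq_empty_or_nonempty SR with hSRe | hSRne
  · have hSUe : SU = ∅ := Set.eq_empty_of_subset_empty (hSRe ▸ hsub)
    rw [hSRe, hSUe]
  · obtain ⟨c₀, hc₀⟩ := hSRne
    have hSUne : SU.Nonempty := ⟨c₀ + 1, hstep c₀ hc₀ 1 one_pos⟩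
    refine le_antisymm ?_ (csInf_le_csInf hbddSR hSUne hsub)
    refine le_csInf ⟨c₀, hc₀⟩ fun c hc => ?_
    exact le_of_forall_pos_le_add fun ε hε => csInf_le hbddSU (hstep c hc ε hε)
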